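/- Let η : [0,T] → [0,∞) be continuous and satisfy η(t) = ∫_0^t η(u) a(u,t) exp(−∫_u^t a(u,v) dv) du + b(t) for all t ∈ [0,T], where a : {0 ≤ u ≤ v ≤ T} → [0,∞) is continuous and b(t) = −∫_0^1 ρ'(z) c(z,t) exp(−∫_0^t c(z,v) dv) dz with ρ : [0,1] → [0,1] C¹ nonincreasing, ρ(0)=1, ρ(1)=0, and c : [0,1]×[0,T] → [0,∞) continuous. Then for all t ∈ [0,T]: ∫_0^t η(u) exp(−∫_u^t a(u,v) dv) du = 1 + ∫_0^1 ρ'(z) exp(−∫_0^t c(z,s) ds) dz. -/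

import Mathlib

open Set MeasureTheory intervalIntegral

lemma ftc_exp (k : ℝ → ℝ) (hk : Continuous k) (a b : ℝ) :
    (∫ s in a..b, k s * Real.exp (-∫ v in a..s, k v))
      = 1 - Real.exp (-∫ v in a..b, k v) := by
  have hI : ∀ s : ℝ, HasDerivAt (fun x => ∫ v in a..x, k v) (k s) s := fun s =>
    integral_hasDerivAt_right (hk.intervalIntegrable _ _)
      hk.stronglyMeasurable.stronglyMeasurableAtFilter hk.continuousAt
  have hD : ∀ s : ℝ, HasDerivAt (fun x => -Real.exp (-∫ v in a..x, k v))
      (k s * Real.exp (-∫ v in a..s, k v)) s := by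
    intro s
    have h : HasDerivAt (fun x => -Real.exp (-∫ v in a..x, k v))
        (-(Real.exp (-∫ v in a..s, k v) * -k s)) s := (((hI s).neg).exp).neg
    convert h using 1
    ring
  have hc : Continuous fun x => ∫ v in a..x, k v :=
    continuous_iff_continuousAt.2 fun s => (hI s).continuousAt
  have hint : IntervalIntegrable (fun s => k s * Real.exp (-∫ v in a..s, k v)) volume a b :=
    (hk.mul (hc.neg.rexp)).intervalIntegrable _ _
  rw [integral_eq_sub_of_hasDerivAt (fun s _ => hD s) hint]
  simp [intervalIntegral.integral_same]
  ring



lemma tri_swap (t : ℝ) (ht : 0 ≤ t) (H : ℝ → ℝ → ℝ)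
    (hH : Continuous fun p : ℝ × ℝ => H p.1 p.2) :
    (∫ u in (0:ℝ)..t, ∫ s in u..t, H u s) = ∫ s in (0:ℝ)..t, ∫ u in (0:ℝ)..s, H u s := by
  set G : ℝ × ℝ → ℝ := fun p => if p.1 ≤ p.2 then H p.1 p.2 else 0 with hG
  have hGm : Measurable G :=
    Measurable.ite (isClosed_le continuous_fst continuous_snd).measurableSet
      hH.measurable measurable_const
  obtain ⟨C, hC⟩ := ((isCompact_Icc (a := (0:ℝ)) (b := t)).prod
    (isCompact_Icc (a := (0:ℝ)) (b := t))).exists_bound_of_continuousOn hH.continuousOn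
  have hbound : ∀ p ∈ Icc (0:ℝ) t ×ˢ Icc (0:ℝ) t, ‖G p‖ ≤ max C 0 := by
    rintro ⟨u, s⟩ ⟨hu, hs⟩
    by_cases h : u ≤ s
    · simp only [hG, if_pos h]
      exact le_max_of_le_left (hC (u, s) ⟨hu, hs⟩)
    · simp [hG, if_neg h]
  set μ : Measure ℝ := volume.restrict (Ioc 0 t) with hμ
  haveI : IsFiniteMeasure μ := by
    constructor
    rw [hμ, Measure.restrict_apply_univ]
    exact measure_Ioc_lt_top
  have hGint : Integrable (Function.uncurry fun u s => G (u, s)) (μ.prod μ) := by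
    refine (integrable_const (max C 0)).mono' ?_ ?_
    · exact (hGm.comp measurable_id).aestronglyMeasurable
    · rw [hμ, Measure.prod_restrict]
      refine ae_restrict_of_forall_mem (measurableSet_Ioc.prod measurableSet_Ioc) ?_
      rintro ⟨u, s⟩ ⟨hu, hs⟩
      exact hbound (u, s) ⟨⟨hu.1.le, hu.2⟩, ⟨hs.1.le, hs.2⟩⟩
  have hswap := integral_integral_swap hGint
  have hsec : ∀ u : ℝ, Measurable fun s => G (u, s) := fun u =>
    hGm.comp (measurable_const.prodMk measurable_id)
  have hsec' : ∀ s : ℝ, Measurable fun u => G (u, s) := fun s =>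
    hGm.comp (measurable_id.prodMk measurable_const)
  -- integrability of sections over subsets of [0,t]
  have hsint : ∀ u ∈ Icc (0:ℝ) t, ∀ I : Set ℝ, MeasurableSet I → I ⊆ Icc 0 t →
      IntegrableOn (fun s => G (u, s)) I := by
    intro u hu I hImeas hIsub
    have hIfin : volume I < ⊤ := ((measure_mono hIsub).trans_lt measure_Icc_lt_top)
    refine Integrable.mono' (g := fun _ => max C 0) (integrableOn_const hIfin.ne) (hsec u).aestronglyMeasurable ?_
    refine ae_restrict_of_forall_mem hImeas fun s hs => ?_
    exact hbound (u, s) ⟨hu, hIsub hs⟩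
  have hsint' : ∀ s ∈ Icc (0:ℝ) t, ∀ I : Set ℝ, MeasurableSet I → I ⊆ Icc 0 t →
      IntegrableOn (fun u => G (u, s)) I := by
    intro s hs I hImeas hIsub
    have hIfin : volume I < ⊤ := ((measure_mono hIsub).trans_lt measure_Icc_lt_top)
    refine Integrable.mono' (g := fun _ => max C 0) (integrableOn_const hIfin.ne) (hsec' s).aestronglyMeasurable ?_
    refine ae_restrict_of_forall_mem hImeas fun u hu => ?_
    exact hbound (u, s) ⟨hIsub hu, hs⟩
  -- left side identification
  have L1 : ∀ u ∈ Ioc (0:ℝ) t, (∫ s in Ioc (0:ℝ) t, G (u, s)) = ∫ s in u..t, H u s := by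
    intro u hu
    have husub : Icc (0:ℝ) u ⊆ Icc 0 t := Icc_subset_Icc le_rfl hu.2
    have h1 : (∫ s in Ioc (0:ℝ) u, G (u, s)) = 0 := by
      rw [integral_Ioc_eq_integral_Ioo]
      rw [setIntegral_congr_fun measurableSet_Ioo (g := fun _ => (0:ℝ))
        (fun s hs => by simp [hG, not_le.2 hs.2])]
      simp
    have h2 : (∫ s in Ioc u t, G (u, s)) = ∫ s in u..t, H u s := by
      rw [intervalIntegral.integral_of_le hu.2]
      exact setIntegral_congr_fun measurableSet_Ioc fun s hs => by simp [hG, hs.1.le]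
    calc (∫ s in Ioc (0:ℝ) t, G (u, s))
        = (∫ s in Ioc (0:ℝ) u ∪ Ioc u t, G (u, s)) := by
          rw [Ioc_union_Ioc_eq_Ioc hu.1.le hu.2]
      _ = (∫ s in Ioc (0:ℝ) u, G (u, s)) + ∫ s in Ioc u t, G (u, s) := by
          exact setIntegral_union (Ioc_disjoint_Ioc_of_le le_rfl) measurableSet_Ioc
            (hsint u ⟨hu.1.le, hu.2⟩ _ measurableSet_Ioc (Ioc_subset_Icc_self.trans husub))
            (hsint u ⟨hu.1.le, hu.2⟩ _ measurableSet_Ioc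
              (Ioc_subset_Icc_self.trans (Icc_subset_Icc hu.1.le le_rfl)))
      _ = ∫ s in u..t, H u s := by rw [h1, h2, zero_add]
  have R1 : ∀ s ∈ Ioc (0:ℝ) t, (∫ u in Ioc (0:ℝ) t, G (u, s)) = ∫ u in (0:ℝ)..s, H u s := by
    intro s hs
    have h1 : (∫ u in Ioc (0:ℝ) s, G (u, s)) = ∫ u in (0:ℝ)..s, H u s := by
      rw [intervalIntegral.integral_of_le hs.1.le]
      exact setIntegral_congr_fun measurableSet_Ioc fun u hu => by simp [hG, hu.2]
    have h2 : (∫ u in Ioc s t, G (u, s)) = 0 := by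
      rw [setIntegral_congr_fun measurableSet_Ioc (g := fun _ => (0:ℝ))
        (fun u hu => by simp [hG, not_le.2 hu.1])]
      simp
    calc (∫ u in Ioc (0:ℝ) t, G (u, s))
        = (∫ u in Ioc (0:ℝ) s ∪ Ioc s t, G (u, s)) := by
          rw [Ioc_union_Ioc_eq_Ioc hs.1.le hs.2]
      _ = (∫ u in Ioc (0:ℝ) s, G (u, s)) + ∫ u in Ioc s t, G (u, s) := by
          exact setIntegral_union (Ioc_disjoint_Ioc_of_le le_rfl) measurableSet_Ioc
            (hsint' s ⟨hs.1.le, hs.2⟩ _ measurableSet_Ioc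
              (Ioc_subset_Icc_self.trans (Icc_subset_Icc le_rfl hs.2)))
            (hsint' s ⟨hs.1.le, hs.2⟩ _ measurableSet_Ioc
              (Ioc_subset_Icc_self.trans (Icc_subset_Icc hs.1.le le_rfl)))
      _ = ∫ u in (0:ℝ)..s, H u s := by rw [h1, h2, add_zero]
  calc (∫ u in (0:ℝ)..t, ∫ s in u..t, H u s)
      = ∫ u in Ioc (0:ℝ) t, ∫ s in u..t, H u s := intervalIntegral.integral_of_le ht
    _ = ∫ u in Ioc (0:ℝ) t, ∫ s in Ioc (0:ℝ) t, G (u, s) :=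
        (setIntegral_congr_fun measurableSet_Ioc fun u hu => (L1 u hu).symm)
    _ = ∫ s in Ioc (0:ℝ) t, ∫ u in Ioc (0:ℝ) t, G (u, s) := hswap
    _ = ∫ s in Ioc (0:ℝ) t, ∫ u in (0:ℝ)..s, H u s :=
        setIntegral_congr_fun measurableSet_Ioc fun s hs => R1 s hs
    _ = ∫ s in (0:ℝ)..t, ∫ u in (0:ℝ)..s, H u s := (intervalIntegral.integral_of_le ht).symm


lemma rect_swap (t : ℝ) (ht : 0 ≤ t) (φ : ℝ → ℝ) (hφm : Measurable φ)
    (hφi : IntegrableOn φ (Ioc 0 1)) (k : ℝ → ℝ → ℝ)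
    (hk : Continuous fun p : ℝ × ℝ => k p.1 p.2) :
    (∫ s in (0:ℝ)..t, ∫ z in (0:ℝ)..1, φ z * k z s)
      = ∫ z in (0:ℝ)..1, φ z * ∫ s in (0:ℝ)..t, k z s := by
  obtain ⟨M, hM⟩ := ((isCompact_Icc (a := (0:ℝ)) (b := 1)).prod
    (isCompact_Icc (a := (0:ℝ)) (b := t))).exists_bound_of_continuousOn hk.continuousOn
  set μ : Measure ℝ := volume.restrict (Ioc 0 1) with hμ
  set ν : Measure ℝ := volume.restrict (Ioc 0 t) with hν
  haveI : IsFiniteMeasure ν := by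
    constructor; rw [hν, Measure.restrict_apply_univ]; exact measure_Ioc_lt_top
  have hint : Integrable (Function.uncurry fun z s => φ z * k z s) (μ.prod ν) := by
    have hdom : Integrable (fun p : ℝ × ℝ => |φ p.1| * max M 0) (μ.prod ν) :=
      Integrable.mul_prod (L := ℝ) hφi.norm (integrable_const _)
    refine hdom.mono' ?_ ?_
    · exact ((hφm.comp measurable_fst).mul hk.measurable).aestronglyMeasurable
    · rw [hμ, hν, Measure.prod_restrict]
      refine ae_restrict_of_forall_mem (measurableSet_Ioc.prod measurableSet_Ioc) ?_
      rintro ⟨z, s⟩ ⟨hz, hs⟩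
      have : ‖k z s‖ ≤ max M 0 :=
        le_max_of_le_left (hM (z, s) ⟨⟨hz.1.le, hz.2⟩, ⟨hs.1.le, hs.2⟩⟩)
      simp only [Function.uncurry, norm_mul]
      exact mul_le_mul_of_nonneg_left this (abs_nonneg _)
  have hswap := (integral_integral_swap hint).symm
  calc (∫ s in (0:ℝ)..t, ∫ z in (0:ℝ)..1, φ z * k z s)
      = ∫ s in Ioc (0:ℝ) t, ∫ z in Ioc (0:ℝ) 1, φ z * k z s := by
        rw [intervalIntegral.integral_of_le ht]
        refine setIntegral_congr_fun measurableSet_Ioc fun s _ => ?_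
        rw [intervalIntegral.integral_of_le zero_le_one]
    _ = ∫ z in Ioc (0:ℝ) 1, ∫ s in Ioc (0:ℝ) t, φ z * k z s := hswap
    _ = ∫ z in (0:ℝ)..1, φ z * ∫ s in (0:ℝ)..t, k z s := by
        rw [intervalIntegral.integral_of_le zero_le_one]
        refine setIntegral_congr_fun measurableSet_Ioc fun z _ => ?_
        rw [intervalIntegral.integral_of_le ht, MeasureTheory.integral_const_mul]

set_option maxHeartbeats 1000000 in
theorem stmt_9 (T : ℝ) (hT : 0 < T)
    (η : ℝ → ℝ) (hηc : ContinuousOn η (Icc 0 T))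
    (hηn : ∀ t ∈ Icc (0:ℝ) T, 0 ≤ η t)
    (a : ℝ → ℝ → ℝ)
    (hac : ContinuousOn (fun p : ℝ × ℝ => a p.1 p.2)
      {p : ℝ × ℝ | 0 ≤ p.1 ∧ p.1 ≤ p.2 ∧ p.2 ≤ T})
    (han : ∀ u v : ℝ, 0 ≤ u → u ≤ v → v ≤ T → 0 ≤ a u v)
    (ρ ρ' : ℝ → ℝ)
    (hρd : ∀ z ∈ Icc (0:ℝ) 1, HasDerivAt ρ (ρ' z) z)
    (hρ'np : ∀ z ∈ Icc (0:ℝ) 1, ρ' z ≤ 0)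
    (hρ0 : ρ 0 = 1) (hρ1 : ρ 1 = 0)
    (hρr : ∀ z ∈ Icc (0:ℝ) 1, ρ z ∈ Icc (0:ℝ) 1)
    (c : ℝ → ℝ → ℝ) (hcc : Continuous fun p : ℝ × ℝ => c p.1 p.2)
    (hcn : ∀ z t, 0 ≤ c z t)
    (heq : ∀ t ∈ Icc (0:ℝ) T,
      η t = (∫ u in (0:ℝ)..t, η u * a u t * Real.exp (-∫ v in u..t, a u v))
        - ∫ z in (0:ℝ)..1, ρ' z * c z t * Real.exp (-∫ v in (0:ℝ)..t, c z v)) :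
    ∀ t ∈ Icc (0:ℝ) T,
      (∫ u in (0:ℝ)..t, η u * Real.exp (-∫ v in u..t, a u v))
        = 1 + ∫ z in (0:ℝ)..1, ρ' z * Real.exp (-∫ s in (0:ℝ)..t, c z s) := by
  rintro t ⟨ht0, htT⟩
  -- clamping to [0, T]
  set q : ℝ → ℝ := fun x => min (max x 0) T with hq
  have hqc : Continuous q := (continuous_id.max continuous_const).min continuous_const
  have hqmem : ∀ x, q x ∈ Icc 0 T := fun x =>
    ⟨le_min (le_max_right x 0) hT.le, min_le_right _ _⟩
  have hqid : ∀ x ∈ Icc 0 T, q x = x := fun x hx => by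
    simp only [hq]
    rw [max_eq_left hx.1, min_eq_left hx.2]
  set ηe : ℝ → ℝ := fun u => η (q u) with hηe
  have hηec : Continuous ηe := hηc.comp_continuous hqc hqmem
  have hηeq : ∀ u ∈ Icc (0:ℝ) T, ηe u = η u := fun u hu => by
    show η (q u) = η u
    rw [hqid u hu]
  set ae : ℝ → ℝ → ℝ := fun u v => a (min (q u) (q v)) (max (q u) (q v)) with hae
  have haec : Continuous fun p : ℝ × ℝ => ae p.1 p.2 := by
    have h := hac.comp_continuous
      (f := fun p : ℝ × ℝ => (min (q p.1) (q p.2), max (q p.1) (q p.2)))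
      ((((hqc.comp continuous_fst).min (hqc.comp continuous_snd)).prodMk
        ((hqc.comp continuous_fst).max (hqc.comp continuous_snd))))
      (fun p => ⟨le_min (hqmem p.1).1 (hqmem p.2).1, min_le_max,
        max_le (hqmem p.1).2 (hqmem p.2).2⟩)
    exact h
  have haeq : ∀ u v : ℝ, 0 ≤ u → u ≤ v → v ≤ T → ae u v = a u v := by
    intro u v hu huv hv
    rw [hae]
    simp only
    rw [hqid u ⟨hu, huv.trans hv⟩, hqid v ⟨hu.trans huv, hv⟩,
      min_eq_left huv, max_eq_right huv]
  have haef : ∀ u : ℝ, Continuous fun v => ae u v := fun u =>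
    haec.comp (continuous_const.prodMk continuous_id)
  -- continuity of the double-parameter primitive
  have hJc : Continuous fun p : ℝ × ℝ => ∫ v in p.1..p.2, ae p.1 v := by
    have huncur : Continuous (Function.uncurry fun (p : ℝ × ℝ) v => ae p.1 v) := by
      have : (Function.uncurry fun (p : ℝ × ℝ) v => ae p.1 v)
          = (fun p : ℝ × ℝ => ae p.1 p.2) ∘ (fun q : (ℝ × ℝ) × ℝ => (q.1.1, q.2)) := rfl
      rw [this]
      exact haec.comp ((continuous_fst.comp continuous_fst).prodMk continuous_snd)
    have h1 : Continuous fun p : ℝ × ℝ => ∫ v in (0:ℝ)..p.2, ae p.1 v :=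
      intervalIntegral.continuous_parametric_intervalIntegral_of_continuous huncur
        continuous_snd
    have h2 : Continuous fun p : ℝ × ℝ => ∫ v in (0:ℝ)..p.1, ae p.1 v :=
      intervalIntegral.continuous_parametric_intervalIntegral_of_continuous huncur
        continuous_fst
    have hEq : ∀ p : ℝ × ℝ, (∫ v in p.1..p.2, ae p.1 v)
        = (∫ v in (0:ℝ)..p.2, ae p.1 v) - ∫ v in (0:ℝ)..p.1, ae p.1 v := fun p =>
      (intervalIntegral.integral_interval_sub_left
        ((haef p.1).intervalIntegrable _ _) ((haef p.1).intervalIntegrable _ _)).symm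
    simp only [hEq]
    exact h1.sub h2
  have hKc : Continuous fun p : ℝ × ℝ => Real.exp (-∫ v in p.1..p.2, ae p.1 v) :=
    hJc.neg.rexp
  set H : ℝ → ℝ → ℝ :=
    fun u s => ηe u * (ae u s * Real.exp (-∫ v in u..s, ae u v)) with hH
  have hHc : Continuous fun p : ℝ × ℝ => H p.1 p.2 :=
    (hηec.comp continuous_fst).mul (haec.mul hKc)
  -- rewrite goal LHS with clamped versions
  have hgoalL : (∫ u in (0:ℝ)..t, η u * Real.exp (-∫ v in u..t, a u v))
      = ∫ u in (0:ℝ)..t, ηe u * Real.exp (-∫ v in u..t, ae u v) := by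
    apply intervalIntegral.integral_congr
    intro u hu
    rw [uIcc_of_le ht0] at hu
    have h1 : (∫ v in u..t, a u v) = ∫ v in u..t, ae u v := by
      apply intervalIntegral.integral_congr
      intro v hv
      rw [uIcc_of_le hu.2] at hv
      exact (haeq u v hu.1 hv.1 (hv.2.trans htT)).symm
    show η u * Real.exp (-∫ v in u..t, a u v) = ηe u * Real.exp (-∫ v in u..t, ae u v)
    rw [hηeq u ⟨hu.1, hu.2.trans htT⟩, h1]
  -- the z-side objects
  set Q : ℝ → ℝ := fun s =>
    ∫ z in (0:ℝ)..1, deriv ρ z * (c z s * Real.exp (-∫ v in (0:ℝ)..s, c z v)) with hQ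
  -- reformulated hypothesis
  have heq' : ∀ s ∈ Icc (0:ℝ) t, (∫ u in (0:ℝ)..s, H u s) = ηe s + Q s := by
    intro s hs
    have hsT : s ∈ Icc (0:ℝ) T := ⟨hs.1, hs.2.trans htT⟩
    have h0 := heq s hsT
    have hA : (∫ u in (0:ℝ)..s, η u * a u s * Real.exp (-∫ v in u..s, a u v))
        = ∫ u in (0:ℝ)..s, H u s := by
      apply intervalIntegral.integral_congr
      intro u hu
      rw [uIcc_of_le hs.1] at hu
      have h1 : (∫ v in u..s, a u v) = ∫ v in u..s, ae u v := by
        apply intervalIntegral.integral_congr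
        intro v hv
        rw [uIcc_of_le hu.2] at hv
        exact (haeq u v hu.1 hv.1 (hv.2.trans hsT.2)).symm
      show η u * a u s * Real.exp (-∫ v in u..s, a u v)
          = ηe u * (ae u s * Real.exp (-∫ v in u..s, ae u v))
      rw [hηeq u ⟨hu.1, hu.2.trans hsT.2⟩, h1,
        haeq u s hu.1 hu.2 hsT.2, mul_assoc]
    have hB : (∫ z in (0:ℝ)..1, ρ' z * c z s * Real.exp (-∫ v in (0:ℝ)..s, c z v)) = Q s := by
      apply intervalIntegral.integral_congr
      intro z hz
      rw [uIcc_of_le zero_le_one] at hz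
      show ρ' z * c z s * Real.exp (-∫ v in (0:ℝ)..s, c z v)
          = deriv ρ z * (c z s * Real.exp (-∫ v in (0:ℝ)..s, c z v))
      rw [(hρd z hz).deriv, mul_assoc]
    rw [hA, hB] at h0
    rw [hηeq s hsT]
    linarith
  -- FTC in the u-direction
  have hstepA : ∀ u ∈ Icc (0:ℝ) t, (∫ s in u..t, H u s)
      = ηe u - ηe u * Real.exp (-∫ v in u..t, ae u v) := by
    intro u _
    show (∫ s in u..t, ηe u * (ae u s * Real.exp (-∫ v in u..s, ae u v)))
        = ηe u - ηe u * Real.exp (-∫ v in u..t, ae u v)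
    rw [intervalIntegral.integral_const_mul, ftc_exp (fun v => ae u v) (haef u) u t]
    ring
  have hswap1 := tri_swap t ht0 H hHc
  -- left side of the swap
  have hηint : IntervalIntegrable ηe volume 0 t := hηec.intervalIntegrable _ _
  have hKtc : Continuous fun u => ηe u * Real.exp (-∫ v in u..t, ae u v) := by
    have h2 : (fun u : ℝ => Real.exp (-∫ v in u..t, ae u v))
        = (fun p : ℝ × ℝ => Real.exp (-∫ v in p.1..p.2, ae p.1 v)) ∘ (fun u : ℝ => (u, t)) :=
      rfl
    refine hηec.mul ?_
    rw [h2]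
    exact hKc.comp (continuous_id.prodMk continuous_const)
  have hL : (∫ u in (0:ℝ)..t, ∫ s in u..t, H u s)
      = (∫ u in (0:ℝ)..t, ηe u)
        - ∫ u in (0:ℝ)..t, ηe u * Real.exp (-∫ v in u..t, ae u v) := by
    rw [intervalIntegral.integral_congr
      (g := fun u => ηe u - ηe u * Real.exp (-∫ v in u..t, ae u v))
      (fun u hu => hstepA u (by rwa [uIcc_of_le ht0] at hu))]
    exact intervalIntegral.integral_sub hηint (hKtc.intervalIntegrable _ _)
  -- right side of the swap
  have hcontH2 : Continuous fun s : ℝ => ∫ u in (0:ℝ)..s, H u s := by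
    have huncur : Continuous (Function.uncurry fun (s : ℝ) (u : ℝ) => H u s) := by
      have : (Function.uncurry fun (s : ℝ) (u : ℝ) => H u s)
          = (fun p : ℝ × ℝ => H p.1 p.2) ∘ (fun q : ℝ × ℝ => (q.2, q.1)) := rfl
      rw [this]
      exact hHc.comp (continuous_snd.prodMk continuous_fst)
    have h := intervalIntegral.continuous_parametric_primitive_of_continuous
      (μ := volume) (a₀ := (0:ℝ)) huncur
    have h2 : (fun s : ℝ => ∫ u in (0:ℝ)..s, H u s)
        = (fun p : ℝ × ℝ => ∫ u in (0:ℝ)..p.2, H u p.1) ∘ (fun s : ℝ => (s, s)) := rfl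
    rw [h2]
    exact h.comp (continuous_id.prodMk continuous_id)
  have hQcont : ContinuousOn Q (Icc 0 t) := by
    refine ContinuousOn.congr ((hcontH2.sub hηec).continuousOn) ?_
    intro s hs
    have h := heq' s hs
    show Q s = (∫ u in (0:ℝ)..s, H u s) - ηe s
    linarith
  have hR : (∫ s in (0:ℝ)..t, ∫ u in (0:ℝ)..s, H u s)
      = (∫ s in (0:ℝ)..t, ηe s) + ∫ s in (0:ℝ)..t, Q s := by
    rw [intervalIntegral.integral_congr (g := fun s => ηe s + Q s)
      (fun s hs => heq' s (by rwa [uIcc_of_le ht0] at hs))]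
    refine intervalIntegral.integral_add hηint ?_
    apply ContinuousOn.intervalIntegrable
    rwa [uIcc_of_le ht0]
  -- integrability of deriv ρ
  have hρcont : ContinuousOn ρ (Icc 0 1) := fun z hz =>
    ((hρd z hz).continuousAt).continuousWithinAt
  have hφint : IntervalIntegrable (deriv ρ) volume 0 1 := by
    have h1 : IntervalIntegrable (fun z => -deriv ρ z) volume 0 1 := by
      apply intervalIntegral.intervalIntegrable_deriv_of_nonneg (g := fun z => -ρ z)
      · rw [uIcc_of_le zero_le_one]; exact hρcont.neg
      · intro x hx
        rw [min_eq_left zero_le_one, max_eq_right zero_le_one] at hx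
        have hx' : x ∈ Icc (0:ℝ) 1 := Ioo_subset_Icc_self hx
        have hd := hρd x hx'
        rw [hd.deriv]
        exact hd.neg
      · intro x hx
        rw [min_eq_left zero_le_one, max_eq_right zero_le_one] at hx
        have hx' : x ∈ Icc (0:ℝ) 1 := Ioo_subset_Icc_self hx
        rw [(hρd x hx').deriv]
        linarith [hρ'np x hx']
    have h2 := h1.neg
    have h3 : (-fun z => -deriv ρ z) = deriv ρ := by funext z; simp
    rwa [h3] at h2
  have hφi : IntegrableOn (deriv ρ) (Ioc 0 1) := hφint.1
  -- FTC in the s-direction for the z-part, and Fubini on the rectangle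
  have hkcont : Continuous fun p : ℝ × ℝ =>
      c p.1 p.2 * Real.exp (-∫ v in (0:ℝ)..p.2, c p.1 v) := by
    have huncur : Continuous (Function.uncurry fun (z : ℝ) (v : ℝ) => c z v) := hcc
    have hprim : Continuous fun p : ℝ × ℝ => ∫ v in (0:ℝ)..p.2, c p.1 v :=
      intervalIntegral.continuous_parametric_primitive_of_continuous huncur
    exact hcc.mul hprim.neg.rexp
  have hswap2 := rect_swap t ht0 (deriv ρ) (measurable_deriv ρ) hφi
    (fun z s => c z s * Real.exp (-∫ v in (0:ℝ)..s, c z v)) hkcont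
  have hQint : (∫ s in (0:ℝ)..t, Q s)
      = ∫ z in (0:ℝ)..1, deriv ρ z
          * ∫ s in (0:ℝ)..t, c z s * Real.exp (-∫ v in (0:ℝ)..s, c z v) := hswap2
  have hEtc : ContinuousOn (fun z => Real.exp (-∫ v in (0:ℝ)..t, c z v)) (uIcc 0 1) := by
    have : Continuous fun z => Real.exp (-∫ v in (0:ℝ)..t, c z v) := by
      have := hkcont -- reuse pieces
      have hprim : Continuous fun p : ℝ × ℝ => ∫ v in (0:ℝ)..p.2, c p.1 v :=
        intervalIntegral.continuous_parametric_primitive_of_continuous hcc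
      have h2 : (fun z : ℝ => ∫ v in (0:ℝ)..t, c z v)
          = (fun p : ℝ × ℝ => ∫ v in (0:ℝ)..p.2, c p.1 v) ∘ (fun z : ℝ => (z, t)) := rfl
      refine Continuous.rexp (Continuous.neg ?_)
      rw [h2]
      exact hprim.comp (continuous_id.prodMk continuous_const)
    exact this.continuousOn
  have hφsum : (∫ z in (0:ℝ)..1, deriv ρ z) = -1 := by
    rw [intervalIntegral.integral_eq_sub_of_hasDerivAt (f := ρ) ?_ hφint, hρ0, hρ1]
    · norm_num
    · intro z hz
      rw [uIcc_of_le zero_le_one] at hz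
      have hd := hρd z hz
      rw [hd.deriv]
      exact hd
  have hQval : (∫ s in (0:ℝ)..t, Q s)
      = -1 - ∫ z in (0:ℝ)..1, deriv ρ z * Real.exp (-∫ v in (0:ℝ)..t, c z v) := by
    rw [hQint]
    have hc1 : ∀ z : ℝ, Continuous fun v => c z v :=
      fun z => hcc.comp (continuous_const.prodMk continuous_id)
    have h1 : (∫ z in (0:ℝ)..1, deriv ρ z
          * ∫ s in (0:ℝ)..t, c z s * Real.exp (-∫ v in (0:ℝ)..s, c z v))
        = ∫ z in (0:ℝ)..1,
            (deriv ρ z - deriv ρ z * Real.exp (-∫ v in (0:ℝ)..t, c z v)) := by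
      apply intervalIntegral.integral_congr
      intro z _
      show deriv ρ z * (∫ s in (0:ℝ)..t, c z s * Real.exp (-∫ v in (0:ℝ)..s, c z v))
          = deriv ρ z - deriv ρ z * Real.exp (-∫ v in (0:ℝ)..t, c z v)
      rw [ftc_exp (fun v => c z v) (hc1 z) 0 t]
      ring
    rw [h1, intervalIntegral.integral_sub hφint (hφint.mul_continuousOn hEtc), hφsum]
  -- assemble
  rw [hswap1, hR, hQval] at hL
  have hfinal : (∫ u in (0:ℝ)..t, ηe u * Real.exp (-∫ v in u..t, ae u v))
      = 1 + ∫ z in (0:ℝ)..1, deriv ρ z * Real.exp (-∫ v in (0:ℝ)..t, c z v) := by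
    have hηeq' : (∫ u in (0:ℝ)..t, ηe u) = ∫ s in (0:ℝ)..t, ηe s := rfl
    linarith
  rw [hgoalL, hfinal]
  congr 1
  apply intervalIntegral.integral_congr
  intro z hz
  rw [uIcc_of_le zero_le_one] at hz
  show deriv ρ z * Real.exp (-∫ v in (0:ℝ)..t, c z v)
      = ρ' z * Real.exp (-∫ s in (0:ℝ)..t, c z s)
  rw [(hρd z hz).deriv]
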